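/- Let m ≥ 4 be an integer, and let M₁ = [[2m,1,0],[m²,0,1],[1,0,0]] and M₂ = [[2m+2,1,0],[(m+1)²,0,1],[1,0,0]]. Let 𝔠 be the cone consisting of the zero vector together with all (x₁,x₂,x₃) ∈ ℝ³ with x₃ > 0, 2.3m ≤ x₁/x₃ ≤ 2.5m+3 and m² ≤ x₂/x₃ ≤ m²+2m+2. Then M₁𝔠 ⊆ 𝔠 and M₂𝔠 ⊆ 𝔠; consequently the semigroup generated by M₁ and M₂ preserves 𝔠. -/
import Mathlib

open Matrix

noncomputable section

/-- `M₁ = [[2m,1,0],[m²,0,1],[1,0,0]]`, the substitution matrix of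
`ζ_m : 0 ↦ 0^{2m} 1^{m²} 2, 1 ↦ 0, 2 ↦ 1`. -/
def M1 (m : ℤ) : Matrix (Fin 3) (Fin 3) ℝ :=
  !![2 * (m : ℝ), 1, 0; (m : ℝ) ^ 2, 0, 1; 1, 0, 0]

/-- `M₂ = [[2m+2,1,0],[(m+1)²,0,1],[1,0,0]]`, the substitution matrix of `ζ_{m+1}`. -/
def M2 (m : ℤ) : Matrix (Fin 3) (Fin 3) ℝ :=
  !![2 * (m : ℝ) + 2, 1, 0; ((m : ℝ) + 1) ^ 2, 0, 1; 1, 0, 0]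

/-- The cone `𝔠`: the zero vector together with all `(x₁,x₂,x₃)` with `x₃ > 0`,
`2.3 m ≤ x₁/x₃ ≤ 2.5 m + 3` and `m² ≤ x₂/x₃ ≤ m² + 2m + 2`. -/
def cone (m : ℤ) : Set (Fin 3 → ℝ) :=
  {x | x = 0 ∨ (0 < x 2 ∧
    2.3 * (m : ℝ) ≤ x 0 / x 2 ∧ x 0 / x 2 ≤ 2.5 * (m : ℝ) + 3 ∧
    (m : ℝ) ^ 2 ≤ x 1 / x 2 ∧ x 1 / x 2 ≤ (m : ℝ) ^ 2 + 2 * (m : ℝ) + 2)}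

lemma key1 (m : ℤ) (hm : 4 ≤ m) : ∀ x ∈ cone m, (M1 m).mulVec x ∈ cone m := by
  intro x hx
  rcases hx with h0 | ⟨h2, ha, hb, hc, hd⟩
  · left; simp [h0]
  · have hm' : (4:ℝ) ≤ (m:ℝ) := by exact_mod_cast hm
    rw [div_le_iff₀ h2] at hb hd
    rw [le_div_iff₀ h2] at ha hc
    have hx0 : 0 < x 0 := by nlinarith
    right
    have e0 : (M1 m).mulVec x 0 = 2*(m:ℝ)*x 0 + x 1 := by
      simp [M1, mulVec, dotProduct, Fin.sum_univ_three]
    have e1 : (M1 m).mulVec x 1 = (m:ℝ)^2*x 0 + x 2 := by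
      simp [M1, mulVec, dotProduct, Fin.sum_univ_three]
    have e2 : (M1 m).mulVec x 2 = x 0 := by
      simp [M1, mulVec, dotProduct, Fin.sum_univ_three]
    rw [e0, e1, e2]
    refine ⟨hx0, ?_, ?_, ?_, ?_⟩
    · rw [le_div_iff₀ hx0]
      nlinarith [mul_le_mul_of_nonneg_left hb (by linarith : (0:ℝ) ≤ 0.3*(m:ℝ)),
        mul_nonneg (by nlinarith : (0:ℝ) ≤ 0.25*(m:ℝ)^2 - 0.9*(m:ℝ)) h2.le]
    · rw [div_le_iff₀ hx0]; nlinarith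
    · rw [le_div_iff₀ hx0]; nlinarith
    · rw [div_le_iff₀ hx0]; nlinarith

lemma key2 (m : ℤ) (hm : 4 ≤ m) : ∀ x ∈ cone m, (M2 m).mulVec x ∈ cone m := by
  intro x hx
  rcases hx with h0 | ⟨h2, ha, hb, hc, hd⟩
  · left; simp [h0]
  · have hm' : (4:ℝ) ≤ (m:ℝ) := by exact_mod_cast hm
    rw [div_le_iff₀ h2] at hb hd
    rw [le_div_iff₀ h2] at ha hc
    have hx0 : 0 < x 0 := by nlinarith
    right
    have e0 : (M2 m).mulVec x 0 = (2*(m:ℝ)+2)*x 0 + x 1 := by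
      simp [M2, mulVec, dotProduct, Fin.sum_univ_three]
    have e1 : (M2 m).mulVec x 1 = ((m:ℝ)+1)^2*x 0 + x 2 := by
      simp [M2, mulVec, dotProduct, Fin.sum_univ_three]
    have e2 : (M2 m).mulVec x 2 = x 0 := by
      simp [M2, mulVec, dotProduct, Fin.sum_univ_three]
    rw [e0, e1, e2]
    refine ⟨hx0, ?_, ?_, ?_, ?_⟩
    · rw [le_div_iff₀ hx0]; nlinarith
    · rw [div_le_iff₀ hx0]
      nlinarith [mul_le_mul_of_nonneg_left ha (by linarith : (0:ℝ) ≤ 0.5*(m:ℝ)+1),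
        mul_nonneg (by nlinarith : (0:ℝ) ≤ 0.15*(m:ℝ)^2 + 0.3*(m:ℝ) - 2) h2.le]
    · rw [le_div_iff₀ hx0]; nlinarith
    · rw [div_le_iff₀ hx0]; nlinarith

/-- For `m ≥ 4`, the matrices `M₁, M₂` map the cone `𝔠` into itself; consequently every
element of the semigroup they generate preserves `𝔠`. -/
theorem stmt10 (m : ℤ) (hm : 4 ≤ m) :
    (∀ x ∈ cone m, (M1 m).mulVec x ∈ cone m) ∧
    (∀ x ∈ cone m, (M2 m).mulVec x ∈ cone m) ∧
    (∀ P ∈ Subsemigroup.closure {M1 m, M2 m}, ∀ x ∈ cone m, P.mulVec x ∈ cone m) := by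
  refine ⟨key1 m hm, key2 m hm, ?_⟩
  intro P hP
  induction hP using Subsemigroup.closure_induction with
  | mem a ha =>
    rcases ha with h | h
    · subst h; exact key1 m hm
    · exact h ▸ key2 m hm
  | mul a b _ _ ha hb =>
    intro x hx
    rw [← Matrix.mulVec_mulVec]
    exact ha _ (hb _ hx)
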